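/- (Bounded-difference property of MPP̂_u.) Let MPP̂_u be computed from samples (x₁,…,xₙ), (y₁,…,yₙ), and let MPP̂_u' be computed from the samples obtained by replacing the single pair (x₁,y₁) by another pair (x₁',y₁') ∈ 𝒳 × 𝒳. Then |MPP̂_u − MPP̂_u'| ≤ 12ν/n. -/

import Mathlib

open MeasureTheory ProbabilityTheory Filter Finset

/-- `Hstar k (x,y) (x',y') = k(x,x') - k(x,y') - k(y,x')`. -/
noncomputable def Hstar {𝒳 : Type*} (k : 𝒳 → 𝒳 → ℝ) (u v : 𝒳 × 𝒳) : ℝ :=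
  k u.1 v.1 - k u.1 v.2 - k u.2 v.1

/-- The U-statistic estimator `MPP̂_u = (1/(n(n-1))) ∑_{i≠j} H*ᵢⱼ`. -/
noncomputable def MPPhat {𝒳 : Type*} (k : 𝒳 → 𝒳 → ℝ) (n : ℕ) (u : Fin n → 𝒳 × 𝒳) : ℝ :=
  ((n : ℝ) * ((n : ℝ) - 1))⁻¹ *
    ∑ i : Fin n, ∑ j ∈ Finset.univ.erase i, Hstar k (u i) (u j)

/-- Bounded-difference property of `MPP̂_u`: replacing the single sample pair
`(x₁, y₁)` (index `0`) by another pair changes `MPP̂_u` by at most `12ν/n`. -/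
theorem mpphat_bounded_difference {𝒳 : Type*} (k : 𝒳 → 𝒳 → ℝ) (ν : ℝ)
    (hsymm : ∀ x x', k x x' = k x' x)
    (hbound : ∀ x x', |k x x'| ≤ ν)
    (n : ℕ) (hn : 2 ≤ n)
    (u u' : Fin n → 𝒳 × 𝒳)
    (hu : ∀ i : Fin n, (i : ℕ) ≠ 0 → u' i = u i) :
    |MPPhat k n u - MPPhat k n u'| ≤ 12 * ν / n := by
  have hn2 : (2:ℝ) ≤ (n:ℝ) := by exact_mod_cast hn
  have hnpos : (0:ℝ) < n := by linarith
  have hn1 : (0:ℝ) < (n:ℝ) - 1 := by linarith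
  set z : Fin n := ⟨0, by omega⟩ with hz
  have hν : 0 ≤ ν := le_trans (abs_nonneg _) (hbound (u z).1 (u z).1)
  have hH : ∀ v w : 𝒳 × 𝒳, |Hstar k v w| ≤ 3 * ν := by
    intro v w
    unfold Hstar
    have h1 := abs_le.mp (hbound v.1 w.1)
    have h2 := abs_le.mp (hbound v.1 w.2)
    have h3 := abs_le.mp (hbound v.2 w.1)
    rw [abs_le]
    constructor <;> [linarith [h1.1, h2.2, h3.2]; linarith [h1.2, h2.1, h3.1]]
  have hdiff : ∀ i j : Fin n,
      |Hstar k (u i) (u j) - Hstar k (u' i) (u' j)|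
        ≤ (if i = z ∨ j = z then 6 * ν else 0) := by
    intro i j
    by_cases hij : i = z ∨ j = z
    · simp only [hij, if_true]
      have h1 := abs_le.mp (hH (u i) (u j))
      have h2 := abs_le.mp (hH (u' i) (u' j))
      rw [abs_le]
      constructor <;> linarith [h1.1, h1.2, h2.1, h2.2]
    · push_neg at hij
      have hi : (i : ℕ) ≠ 0 := by
        intro h; exact hij.1 (Fin.ext (by simp [hz, h]))
      have hj : (j : ℕ) ≠ 0 := by
        intro h; exact hij.2 (Fin.ext (by simp [hz, h]))
      simp [hu i hi, hu j hj, hij]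
  have key : |(∑ i : Fin n, ∑ j ∈ Finset.univ.erase i, Hstar k (u i) (u j))
      - ∑ i : Fin n, ∑ j ∈ Finset.univ.erase i, Hstar k (u' i) (u' j)|
      ≤ 12 * ν * ((n:ℝ) - 1) := by
    rw [← Finset.sum_sub_distrib]
    calc |∑ i : Fin n, ((∑ j ∈ Finset.univ.erase i, Hstar k (u i) (u j))
          - ∑ j ∈ Finset.univ.erase i, Hstar k (u' i) (u' j))|
        ≤ ∑ i : Fin n, |(∑ j ∈ Finset.univ.erase i, Hstar k (u i) (u j))
          - ∑ j ∈ Finset.univ.erase i, Hstar k (u' i) (u' j)| :=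
          Finset.abs_sum_le_sum_abs _ _
      _ ≤ ∑ i : Fin n, ∑ j ∈ Finset.univ.erase i,
            |Hstar k (u i) (u j) - Hstar k (u' i) (u' j)| := by
          apply Finset.sum_le_sum
          intro i _
          rw [← Finset.sum_sub_distrib]
          exact Finset.abs_sum_le_sum_abs _ _
      _ ≤ ∑ i : Fin n, ∑ j ∈ Finset.univ.erase i,
            (if i = z ∨ j = z then 6 * ν else 0) := by
          apply Finset.sum_le_sum; intro i _
          apply Finset.sum_le_sum; intro j _
          exact hdiff i j
      _ ≤ 12 * ν * ((n:ℝ) - 1) := by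
          rw [← Finset.add_sum_erase _ _ (Finset.mem_univ z)]
          have h1 : (∑ j ∈ Finset.univ.erase z,
              (if z = z ∨ j = z then 6 * ν else 0)) = ((n:ℝ) - 1) * (6 * ν) := by
            simp [Finset.sum_const, Finset.card_erase_of_mem, Finset.card_univ]
            exact Or.inl (by push_cast [Nat.cast_sub (show 1 ≤ n by omega)]; ring)
          have h2 : (∑ i ∈ Finset.univ.erase z, ∑ j ∈ Finset.univ.erase i,
              (if i = z ∨ j = z then 6 * ν else 0)) = ((n:ℝ) - 1) * (6 * ν) := by
            have : ∀ i ∈ Finset.univ.erase z, (∑ j ∈ Finset.univ.erase i,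
                (if i = z ∨ j = z then 6 * ν else 0)) = 6 * ν := by
              intro i hi
              have hiz : i ≠ z := (Finset.mem_erase.mp hi).1
              have hzi : z ∈ Finset.univ.erase i :=
                Finset.mem_erase.mpr ⟨fun h => hiz h.symm, Finset.mem_univ z⟩
              simp only [hiz, false_or]
              rw [Finset.sum_ite_eq' (Finset.univ.erase i) z (fun _ => 6 * ν)]
              simp [hzi]
            rw [Finset.sum_congr rfl this]
            simp [Finset.sum_const, Finset.card_erase_of_mem, Finset.card_univ]
            exact Or.inl (by push_cast [Nat.cast_sub (show 1 ≤ n by omega)]; ring)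
          rw [h1, h2]
          ring_nf
          nlinarith [hν, hn1]
  unfold MPPhat
  rw [← mul_sub, abs_mul, abs_inv, abs_of_pos (by positivity : (0:ℝ) < (n:ℝ) * ((n:ℝ) - 1))]
  calc ((n:ℝ) * ((n:ℝ) - 1))⁻¹ * |_| ≤ ((n:ℝ) * ((n:ℝ) - 1))⁻¹ * (12 * ν * ((n:ℝ) - 1)) := by
        apply mul_le_mul_of_nonneg_left key (by positivity)
    _ = 12 * ν / n := by field_simp
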